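/- arXiv:1903.12333 — 2 statements merged into one kernel-verified Lean document; each statement's English description precedes it below -/
import Mathlib

section
/- Let n ≥ 2 and let (C, C̄) be an equitable 2-partition of the Hamming graph H(n,q) with quotient matrix S satisfying S₁₁ − S₂₁ = (q−1)n − 2q. Then for every coordinate i ∈ {1,…,n} and every symbol α ∈ 𝒜, one has 2·|{x ∈ C : x_i = α}| = S₂₁·q^{n−2}. -/
set_option linter.unusedSectionVars false
set_option maxHeartbeats 1000000

open Finset

section auxlemmas
variable {n : ℕ} {𝒜 : Type*} [Fintype 𝒜] [DecidableEq 𝒜]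

section auxlemmas
variable {n : ℕ} {𝒜 : Type*} [Fintype 𝒜] [DecidableEq 𝒜]


open Finset

lemma hd_update (x : Fin n → 𝒜) (j : Fin n) (a : 𝒜) (ha : a ≠ x j) :
    hammingDist x (Function.update x j a) = 1 := by
  rw [hammingDist]
  rw [show ({i | x i ≠ Function.update x j a i} : Finset (Fin n)) = {j} from ?_]
  · simp
  · ext k
    by_cases h : k = j <;> simp [h, Function.update_apply, ha.symm]

lemma hd_one_iff (x y : Fin n → 𝒜) :
    hammingDist x y = 1 ↔ ∃ j a, a ≠ x j ∧ y = Function.update x j a := by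
  constructor
  · intro h
    rw [hammingDist, Finset.card_eq_one] at h
    obtain ⟨j, hj⟩ := h
    have hjm : x j ≠ y j := by
      have : j ∈ ({i | x i ≠ y i} : Finset (Fin n)) := by rw [hj]; simp
      simpa using this
    refine ⟨j, y j, hjm.symm, funext fun k => ?_⟩
    by_cases h : k = j
    · subst h; simp
    · have : k ∉ ({i | x i ≠ y i} : Finset (Fin n)) := by rw [hj]; simp [h]
      simp only [Finset.mem_filter, Finset.mem_univ, true_and, not_not,
        Set.mem_setOf_eq] at this
      simp [Function.update_apply, h]
      tauto
  · rintro ⟨j, a, ha, rfl⟩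
    exact hd_update x j a ha

lemma update_inj (x : Fin n → 𝒜) {j j' : Fin n} {a a' : 𝒜} (ha : a ≠ x j)
    (h : Function.update x j a = Function.update x j' a') : j = j' ∧ a = a' := by
  have hj : j = j' := by
    by_contra hne
    have := congrFun h j
    simp [Function.update_apply, hne] at this
    exact ha this
  subst hj
  have := congrFun h j
  simp at this
  exact ⟨rfl, this⟩

/-- Master counting lemma: neighbors of `x` satisfying `P`. -/
lemma count_nbhd (x : Fin n → 𝒜) (P : (Fin n → 𝒜) → Prop) [DecidablePred P] :
    ({y | hammingDist x y = 1 ∧ P y} : Finset (Fin n → 𝒜)).card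
      = ∑ j : Fin n, ({a | a ≠ x j ∧ P (Function.update x j a)} : Finset 𝒜).card := by
  have key : ({y | hammingDist x y = 1 ∧ P y} : Finset (Fin n → 𝒜)).card
      = ({p : Fin n × 𝒜 | p.2 ≠ x p.1 ∧ P (Function.update x p.1 p.2)} :
          Finset (Fin n × 𝒜)).card := by
    refine (Finset.card_bij (fun p _ => Function.update x p.1 p.2) ?_ ?_ ?_).symm
    · rintro ⟨j, a⟩ hp
      simp only [Finset.mem_filter, Finset.mem_univ, true_and, Set.mem_setOf_eq] at hp ⊢
      exact ⟨hd_update x j a hp.1, hp.2⟩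
    · rintro ⟨j, a⟩ hp ⟨j', a'⟩ hp' h
      simp only [Finset.mem_filter, Finset.mem_univ, true_and, Set.mem_setOf_eq] at hp hp'
      obtain ⟨h1, h2⟩ := update_inj x hp.1 h
      simp [h1, h2]
    · intro y hy
      simp only [Finset.mem_filter, Finset.mem_univ, true_and, Set.mem_setOf_eq] at hy
      obtain ⟨j, a, ha, rfl⟩ := (hd_one_iff x y).mp hy.1
      exact ⟨⟨j, a⟩, by simp only [Finset.mem_filter, Finset.mem_univ, true_and,
        Set.mem_setOf_eq]; exact ⟨ha, hy.2⟩, rfl⟩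
  rw [key, Finset.card_filter, Fintype.sum_prod_type]
  exact Finset.sum_congr rfl fun j _ => (Finset.card_filter _ _).symm

lemma card_ne (b : 𝒜) : ({a | a ≠ b} : Finset 𝒜).card = Fintype.card 𝒜 - 1 := by
  rw [show ({a | a ≠ b} : Finset 𝒜) = Finset.univ.erase b from ?_,
    Finset.card_erase_of_mem (Finset.mem_univ _), Finset.card_univ]
  ext a; simp

lemma count_deg (x : Fin n → 𝒜) :
    ({y | hammingDist x y = 1} : Finset (Fin n → 𝒜)).card = n * (Fintype.card 𝒜 - 1) := by
  have h := count_nbhd x (fun _ => True)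
  simp only [and_true] at h
  rw [h, Finset.sum_congr rfl fun j _ => card_ne (x j)]
  simp [mul_comm]

lemma count_col_eq (x : Fin n → 𝒜) (i : Fin n) (α : 𝒜) (hx : x i = α) :
    ({y | hammingDist x y = 1 ∧ y i = α} : Finset (Fin n → 𝒜)).card
      = (n - 1) * (Fintype.card 𝒜 - 1) := by
  rw [count_nbhd x (fun y => y i = α)]
  have hterm : ∀ j : Fin n, ({a | a ≠ x j ∧ Function.update x j a i = α} : Finset 𝒜).card
      = if j = i then 0 else Fintype.card 𝒜 - 1 := by
    intro j
    by_cases h : j = i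
    · rw [if_pos h]
      subst h
      rw [Finset.card_eq_zero, Finset.filter_eq_empty_iff]
      intro a _
      rw [Function.update_self]
      rintro ⟨ha, rfl⟩
      exact ha hx.symm
    · rw [if_neg h]
      have he : ∀ a : 𝒜, (a ≠ x j ∧ Function.update x j a i = α) ↔ a ≠ x j := by
        intro a
        rw [Function.update_apply, if_neg (fun hh : i = j => h hh.symm)]
        simp [hx]
      rw [Finset.filter_congr fun a _ => he a]
      exact card_ne (x j)
  rw [Finset.sum_congr rfl fun j _ => hterm j]
  -- ∑ j, ite (j = i) 0 c = (n-1) * c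
  rw [← Finset.sum_erase_add _ _ (Finset.mem_univ i), if_pos rfl, add_zero]
  rw [Finset.sum_congr rfl fun j hj => if_neg (Finset.mem_erase.mp hj).1]
  rw [Finset.sum_const, Finset.card_erase_of_mem (Finset.mem_univ i), Finset.card_univ,
    Fintype.card_fin, smul_eq_mul]

lemma count_col_ne (x : Fin n → 𝒜) (i : Fin n) (α : 𝒜) (hx : x i ≠ α) :
    ({y | hammingDist x y = 1 ∧ y i = α} : Finset (Fin n → 𝒜)).card = 1 := by
  rw [count_nbhd x (fun y => y i = α)]
  have hterm : ∀ j : Fin n, ({a | a ≠ x j ∧ Function.update x j a i = α} : Finset 𝒜).card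
      = if j = i then 1 else 0 := by
    intro j
    by_cases h : j = i
    · rw [if_pos h]
      subst h
      have he : ∀ a : 𝒜, (a ≠ x j ∧ Function.update x j a j = α) ↔ a = α := by
        intro a
        rw [Function.update_self]
        constructor
        · rintro ⟨_, rfl⟩; rfl
        · rintro rfl; exact ⟨fun hh => hx hh.symm, rfl⟩
      rw [Finset.filter_congr fun a _ => he a, Finset.filter_eq', if_pos (Finset.mem_univ α),
        Finset.card_singleton]
    · rw [if_neg h, Finset.card_eq_zero, Finset.filter_eq_empty_iff]
      intro a _
      rintro ⟨-, hupd⟩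
      rw [Function.update_apply, if_neg (fun hh : i = j => h hh.symm)] at hupd
      exact hx hupd
  rw [Finset.sum_congr rfl fun j _ => hterm j]
  simp

lemma count_col (i : Fin n) (α : 𝒜) :
    ({y | y i = α} : Finset (Fin n → 𝒜)).card = Fintype.card 𝒜 ^ (n - 1) := by
  rw [← Fintype.card_subtype]
  have e : {y : Fin n → 𝒜 // y i = α} ≃ ({j : Fin n // j ≠ i} → 𝒜) :=
    { toFun := fun y j => y.1 j.1
      invFun := fun g => ⟨fun j => if h : j = i then α else g ⟨j, h⟩, by simp⟩
      left_inv := fun y => Subtype.ext (funext fun j => by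
        by_cases h : j = i
        · subst h; simp [y.2]
        · simp [h])
      right_inv := fun g => funext fun j => by simp [j.2] }
  rw [Fintype.card_congr e, Fintype.card_fun]
  congr 1
  rw [Fintype.card_subtype]
  rw [show ({j | j ≠ i} : Finset (Fin n)) = Finset.univ.erase i from by ext j; simp]
  rw [Finset.card_erase_of_mem (Finset.mem_univ i), Finset.card_univ, Fintype.card_fin]

lemma swap_count (A B : Finset (Fin n → 𝒜)) :
    ∑ x ∈ A, ({y ∈ B | hammingDist x y = 1} : Finset _).card
      = ∑ y ∈ B, ({x ∈ A | hammingDist x y = 1} : Finset _).card := by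
  simp only [Finset.card_filter]
  rw [Finset.sum_comm]

end auxlemmas


end auxlemmas


/-- `(C, Cᶜ)` is an equitable 2-partition of the graph `G` (both cells nonempty) with
quotient matrix `S`: every vertex of `C` has exactly `S 0 0` neighbors in `C` and `S 0 1`
neighbors in `Cᶜ`, and every vertex of `Cᶜ` has exactly `S 1 0` neighbors in `C` and
`S 1 1` neighbors in `Cᶜ`. -/
def IsEquitable2 {V : Type*} (G : SimpleGraph V) (C : Set V)
    (S : Matrix (Fin 2) (Fin 2) ℤ) : Prop :=
  C.Nonempty ∧ Cᶜ.Nonempty ∧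
    (∀ x ∈ C, ((G.neighborSet x ∩ C).ncard : ℤ) = S 0 0 ∧
      ((G.neighborSet x ∩ Cᶜ).ncard : ℤ) = S 0 1) ∧
    (∀ x ∈ Cᶜ, ((G.neighborSet x ∩ C).ncard : ℤ) = S 1 0 ∧
      ((G.neighborSet x ∩ Cᶜ).ncard : ℤ) = S 1 1)

/-- The Hamming graph `H(n,q)` on the vertex set `𝒜ⁿ` (where `|𝒜| = q`): two vertices are
adjacent iff they differ in exactly one coordinate. -/
def hammingGraph (n : ℕ) (𝒜 : Type*) [DecidableEq 𝒜] : SimpleGraph (Fin n → 𝒜) where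
  Adj x y := hammingDist x y = 1
  symm := ⟨fun x y (h : hammingDist x y = 1) => by rwa [hammingDist_comm]⟩
  loopless := ⟨fun x (h : hammingDist x x = 1) => by simp [hammingDist_self] at h⟩

/-- If `(C, Cᶜ)` is an equitable 2-partition of `H(n,q)`, `n ≥ 2`, with
quotient matrix `S` satisfying `S₁₁ - S₂₁ = (q-1)n - 2q`, then for every coordinate `i`
and symbol `α` one has `2 |{x ∈ C : x i = α}| = S₂₁ q^(n-2)`. -/
theorem stmt1 {𝒜 : Type*} [Fintype 𝒜] [DecidableEq 𝒜] (q n : ℕ)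
    (hq : Fintype.card 𝒜 = q) (hq2 : 2 ≤ q) (hn : 2 ≤ n)
    (C : Set (Fin n → 𝒜)) (S : Matrix (Fin 2) (Fin 2) ℤ)
    (hS : IsEquitable2 (hammingGraph n 𝒜) C S)
    (heig : S 0 0 - S 1 0 = ((q : ℤ) - 1) * n - 2 * q) :
    ∀ (i : Fin n) (α : 𝒜),
      2 * (({x ∈ C | x i = α}).ncard : ℤ) = S 1 0 * (q : ℤ) ^ (n - 2) := by
  classical
  subst hq
  intro i α
  obtain ⟨⟨x0, hx0⟩, -, hCeq, hCceq⟩ := hS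
  set q : ℕ := Fintype.card 𝒜 with hqdef
  have hq1 : (1:ℕ) ≤ q := by omega
  have hn1 : (1:ℕ) ≤ n := by omega
  have hs1 : n - 1 + 1 = n := by omega
  have hs2 : n - 2 + 1 = n - 1 := by omega
  have hQ0 : ((q:ℤ)) ≠ 0 := by
    have : (0:ℤ) < (q:ℤ) := by exact_mod_cast (by omega : 0 < q)
    exact this.ne'
  -- finset/ncard conversion for neighbor sets
  have hnb : ∀ (z : Fin n → 𝒜) (D : Set (Fin n → 𝒜)),
      (((hammingGraph n 𝒜).neighborSet z ∩ D).ncard)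
        = ({y | hammingDist z y = 1 ∧ y ∈ D} : Finset (Fin n → 𝒜)).card := by
    intro z D
    rw [← Set.ncard_coe_finset]
    congr 1
    ext y
    simp only [Finset.coe_filter, Finset.mem_univ, true_and, Set.mem_inter_iff,
      Set.mem_setOf_eq, SimpleGraph.mem_neighborSet]
    exact and_congr_left' Iff.rfl
  have hC2 : ∀ x ∈ C,
      ((({y | hammingDist x y = 1 ∧ y ∈ C} : Finset (Fin n → 𝒜)).card : ℤ) = S 0 0) ∧
      ((({y | hammingDist x y = 1 ∧ y ∉ C} : Finset (Fin n → 𝒜)).card : ℤ) = S 0 1) := by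
    intro x hx
    obtain ⟨h1, h2⟩ := hCeq x hx
    rw [hnb] at h1 h2
    refine ⟨h1, ?_⟩
    rw [← h2]
    congr 2
    ext y
    simp
  have hCc2 : ∀ x, x ∉ C →
      ((({y | hammingDist x y = 1 ∧ y ∈ C} : Finset (Fin n → 𝒜)).card : ℤ) = S 1 0) := by
    intro x hx
    have h1 := (hCceq x hx).1
    rw [hnb] at h1
    exact h1
  -- the key finsets
  set CF : Finset (Fin n → 𝒜) := {x | x ∈ C} with hCF
  set CFc : Finset (Fin n → 𝒜) := {x | x ∉ C} with hCFc
  set colF : Finset (Fin n → 𝒜) := {y | y i = α} with hcolF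
  set a : ℕ := (CF.filter fun x => x i = α).card with ha
  set b : ℕ := (CF.filter fun x => ¬ x i = α).card with hb
  set a' : ℕ := (colF.filter fun y => y ∈ C).card with ha'
  set b' : ℕ := (colF.filter fun y => ¬ y ∈ C).card with hb'
  have hx0' : x0 ∈ CF := by simp [hCF, hx0]
  -- goal rewriting
  have hgoal : ({x ∈ C | x i = α} : Set (Fin n → 𝒜)).ncard = a := by
    rw [ha, ← Set.ncard_coe_finset]
    congr 1
    ext x
    simp [hCF]
  rw [hgoal]
  -- E1 : degree split
  have E1 : S 0 0 + S 0 1 = ((n * (q - 1) : ℕ) : ℤ) := by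
    obtain ⟨h1, h2⟩ := hC2 x0 hx0
    rw [← h1, ← h2, ← Nat.cast_add]
    congr 1
    rw [← count_deg x0]
    rw [show ({y | hammingDist x0 y = 1 ∧ y ∈ C} : Finset (Fin n → 𝒜))
        = ({y | hammingDist x0 y = 1} : Finset (Fin n → 𝒜)).filter (fun y => y ∈ C) from by
      rw [Finset.filter_filter]]
    rw [show ({y | hammingDist x0 y = 1 ∧ y ∉ C} : Finset (Fin n → 𝒜))
        = ({y | hammingDist x0 y = 1} : Finset (Fin n → 𝒜)).filter (fun y => ¬ y ∈ C) from by
      rw [Finset.filter_filter]]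
    exact Finset.card_filter_add_card_filter_not _
  -- E2b : total count
  have E2b : (CF.card : ℤ) + (CFc.card : ℤ) = (q:ℤ) ^ n := by
    rw [← Nat.cast_add]
    have : CF.card + CFc.card = (Finset.univ : Finset (Fin n → 𝒜)).card := by
      rw [hCF, hCFc]
      exact Finset.card_filter_add_card_filter_not _
    rw [this, Finset.card_univ]
    have : Fintype.card (Fin n → 𝒜) = q ^ n := by
      rw [Fintype.card_fun, Fintype.card_fin]
    rw [this]
    push_cast
    ring
  -- E2 : edge double count between C and its complement
  have E2 : (CF.card : ℤ) * S 0 1 = (CFc.card : ℤ) * S 1 0 := by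
    have hsw := swap_count CF CFc
    have hL : ∑ x ∈ CF, (({y ∈ CFc | hammingDist x y = 1} : Finset (Fin n → 𝒜)).card : ℤ)
        = (CF.card : ℤ) * S 0 1 := by
      rw [Finset.sum_congr rfl (fun x hx => ?_), Finset.sum_const, nsmul_eq_mul]
      have hxC : x ∈ C := by simpa [hCF] using hx
      rw [show ({y ∈ CFc | hammingDist x y = 1} : Finset (Fin n → 𝒜))
          = ({y | hammingDist x y = 1 ∧ y ∉ C} : Finset (Fin n → 𝒜)) from by
        rw [hCFc, Finset.filter_filter]
        exact Finset.filter_congr fun y _ => and_comm]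
      exact (hC2 x hxC).2
    have hR : ∑ y ∈ CFc, (({x ∈ CF | hammingDist x y = 1} : Finset (Fin n → 𝒜)).card : ℤ)
        = (CFc.card : ℤ) * S 1 0 := by
      rw [Finset.sum_congr rfl (fun y hy => ?_), Finset.sum_const, nsmul_eq_mul]
      have hyC : y ∉ C := by simpa [hCFc] using hy
      rw [show ({x ∈ CF | hammingDist x y = 1} : Finset (Fin n → 𝒜))
          = ({x | hammingDist y x = 1 ∧ x ∈ C} : Finset (Fin n → 𝒜)) from by
        ext x
        simp only [hCF, Finset.mem_filter, Finset.mem_univ, true_and, Set.mem_setOf_eq]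
        rw [hammingDist_comm]
        tauto]
      exact hCc2 y hyC
    rw [← hL, ← hR, ← Nat.cast_sum, ← Nat.cast_sum]
    exact_mod_cast congrArg (Nat.cast : ℕ → ℤ) hsw
  -- E3 splits
  have E3b : (a : ℤ) + (b : ℤ) = (CF.card : ℤ) := by
    rw [← Nat.cast_add]
    congr 1
    exact Finset.card_filter_add_card_filter_not _
  have E3c : (a : ℤ) + (b' : ℤ) = (q:ℤ) ^ (n-1) := by
    have haa' : a = a' := by
      rw [ha, ha']
      congr 1
      rw [hCF, hcolF, Finset.filter_filter, Finset.filter_filter]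
      exact Finset.filter_congr fun y _ => and_comm
    have : a' + b' = q ^ (n-1) := by
      rw [ha', hb', ← count_col i α]
      exact Finset.card_filter_add_card_filter_not _
    rw [haa', ← Nat.cast_add, this]
    push_cast
    ring
  -- E3 : double count of edges from C into the column
  have E3 : (a : ℤ) * (((n-1) * (q-1) : ℕ) : ℤ) + (b : ℤ)
      = (a : ℤ) * S 0 0 + (b' : ℤ) * S 1 0 := by
    have hsw := swap_count CF colF
    have hL : ∑ x ∈ CF, ({y ∈ colF | hammingDist x y = 1} : Finset (Fin n → 𝒜)).card
        = a * ((n-1) * (q-1)) + b := by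
      have hterm : ∀ x ∈ CF, ({y ∈ colF | hammingDist x y = 1} : Finset (Fin n → 𝒜)).card
          = if x i = α then (n-1) * (q-1) else 1 := by
        intro x _
        rw [show ({y ∈ colF | hammingDist x y = 1} : Finset (Fin n → 𝒜))
            = ({y | hammingDist x y = 1 ∧ y i = α} : Finset (Fin n → 𝒜)) from by
          rw [hcolF, Finset.filter_filter]
          exact Finset.filter_congr fun y _ => and_comm]
        by_cases hxi : x i = α
        · rw [if_pos hxi]
          exact count_col_eq x i α hxi
        · rw [if_neg hxi]
          exact count_col_ne x i α hxi
      rw [Finset.sum_congr rfl hterm, Finset.sum_ite, Finset.sum_const, Finset.sum_const]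
      simp [ha, hb, mul_comm]
    have hR : ∑ y ∈ colF, (({x ∈ CF | hammingDist x y = 1} : Finset (Fin n → 𝒜)).card : ℤ)
        = (a' : ℤ) * S 0 0 + (b' : ℤ) * S 1 0 := by
      have hterm : ∀ y ∈ colF, (({x ∈ CF | hammingDist x y = 1} : Finset (Fin n → 𝒜)).card : ℤ)
          = if y ∈ C then S 0 0 else S 1 0 := by
        intro y _
        rw [show ({x ∈ CF | hammingDist x y = 1} : Finset (Fin n → 𝒜))
            = ({x | hammingDist y x = 1 ∧ x ∈ C} : Finset (Fin n → 𝒜)) from by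
          ext x
          simp only [hCF, Finset.mem_filter, Finset.mem_univ, true_and, Set.mem_setOf_eq]
          rw [hammingDist_comm]
          tauto]
        by_cases hyC : y ∈ C
        · rw [if_pos hyC]
          exact (hC2 y hyC).1
        · rw [if_neg hyC]
          exact hCc2 y hyC
      rw [Finset.sum_congr rfl hterm, Finset.sum_ite, Finset.sum_const, Finset.sum_const,
        nsmul_eq_mul, nsmul_eq_mul, ← ha', ← hb']
    have haa' : (a : ℤ) = (a' : ℤ) := by
      congr 1
      rw [ha, ha']
      congr 1
      rw [hCF, hcolF, Finset.filter_filter, Finset.filter_filter]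
      exact Finset.filter_congr fun y _ => and_comm
    have hcast := congrArg (Nat.cast : ℕ → ℤ) hsw
    rw [hL, Nat.cast_sum, hR, Nat.cast_add, Nat.cast_mul] at hcast
    linear_combination hcast - S 0 0 * haa'
  -- power identities
  have hpow1 : (q:ℤ) ^ n = (q:ℤ) * (q:ℤ) ^ (n-1) := by
    have hp := pow_succ (q:ℤ) (n-1)
    rw [hs1] at hp
    rw [hp]
    ring
  have hpow2 : (q:ℤ) ^ (n-1) = (q:ℤ) * (q:ℤ) ^ (n-2) := by
    have hp := pow_succ (q:ℤ) (n-2)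
    rw [hs2] at hp
    rw [hp]
    ring
  -- cast cleanups
  have E1' : S 0 0 + S 0 1 = (n:ℤ) * ((q:ℤ) - 1) := by
    rw [E1, Nat.cast_mul, Nat.cast_sub hq1, Nat.cast_one]
  have E3' : (a : ℤ) * (((n:ℤ)-1) * ((q:ℤ)-1)) + (b : ℤ)
      = (a : ℤ) * S 0 0 + (b' : ℤ) * S 1 0 := by
    rw [← E3, Nat.cast_mul, Nat.cast_sub hn1, Nat.cast_sub hq1, Nat.cast_one]
  -- main algebra
  have h2c : 2 * (CF.card : ℤ) = (q:ℤ) ^ (n-1) * S 1 0 := by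
    apply mul_left_cancel₀ hQ0
    linear_combination (CF.card : ℤ) * heig - (CF.card : ℤ) * E1' + E2
      + S 1 0 * hpow1 + S 1 0 * E2b
  have hqa : (q:ℤ) * (a:ℤ) = (q:ℤ)^(n-1) * S 1 0 - (CF.card : ℤ) := by
    linear_combination E3' - E3b + S 1 0 * E3c + (a:ℤ) * heig
  apply mul_left_cancel₀ hQ0
  linear_combination 2 * hqa - h2c + S 1 0 * hpow2
end

section
/- Let q, q' ≥ 2 and let G be the graph on Fin q × Fin q' in which two vertices are adjacent iff they differ in exactly one coordinate (the Cartesian product K_q □ K_{q'}). Let C be a subset of the vertices with both C and its complement nonempty. Then (C, C̄) is an equitable 2-partition of G whose quotient matrix S satisfies S₁₁ − S₂₁ = −2 if and only if there is a rational number c such that |C ∩ ({a} × Fin q')| = c·q' for every a ∈ Fin q and |C ∩ (Fin q × {b})| = c·q for every b ∈ Fin q'; moreover, in that case c = S₂₁/(q + q'). -/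
/-- The Cartesian product `K_q □ K_{q'}` : the graph on pairs in which two vertices are
adjacent iff they differ in exactly one coordinate. -/
def rookGraph (α β : Type*) : SimpleGraph (α × β) where
  Adj x y := (x.1 = y.1 ∧ x.2 ≠ y.2) ∨ (x.1 ≠ y.1 ∧ x.2 = y.2)
  symm := by
    constructor
    rintro ⟨a, b⟩ ⟨c, d⟩ (⟨h1, h2⟩ | ⟨h1, h2⟩)
    · exact Or.inl ⟨h1.symm, h2.symm⟩
    · exact Or.inr ⟨h1.symm, h2.symm⟩
  loopless := ⟨by rintro ⟨a, b⟩ (⟨h1, h2⟩ | ⟨h1, h2⟩) <;> simp_all⟩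

lemma rook_key {q q' : ℕ} (D : Set (Fin q × Fin q')) (x : Fin q × Fin q')
    (e : ℕ) (he : (x ∈ D → e = 2) ∧ (x ∉ D → e = 0)) :
    ((rookGraph (Fin q) (Fin q')).neighborSet x ∩ D).ncard + e
      = (D ∩ {p | p.1 = x.1}).ncard + (D ∩ {p | p.2 = x.2}).ncard := by
  classical
  set R := D ∩ {p | p.1 = x.1} with hR
  set K := D ∩ {p | p.2 = x.2} with hK
  have hset : (rookGraph (Fin q) (Fin q')).neighborSet x ∩ D = (R \ {x}) ∪ (K \ {x}) := by
    ext ⟨u, v⟩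
    obtain ⟨a, b⟩ := x
    simp only [hR, hK, SimpleGraph.mem_neighborSet, rookGraph, Set.mem_inter_iff,
      Set.mem_union, Set.mem_diff, Set.mem_singleton_iff, Set.mem_setOf_eq, Prod.mk.injEq]
    constructor
    · rintro ⟨⟨h1, h2⟩ | ⟨h1, h2⟩, hD⟩
      · exact Or.inl ⟨⟨hD, h1.symm⟩, fun h => h2 h.2.symm⟩
      · exact Or.inr ⟨⟨hD, h2.symm⟩, fun h => h1 h.1.symm⟩
    · rintro (⟨⟨hD, h1⟩, h2⟩ | ⟨⟨hD, h1⟩, h2⟩)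
      · exact ⟨Or.inl ⟨h1.symm, fun h => h2 ⟨h1, h.symm⟩⟩, hD⟩
      · exact ⟨Or.inr ⟨fun h => h2 ⟨h.symm, h1⟩, h1.symm⟩, hD⟩
  have hdisj : Disjoint (R \ {x}) (K \ {x}) := by
    rw [Set.disjoint_left]
    rintro ⟨u, v⟩ ⟨⟨_, h1⟩, h2⟩ ⟨⟨_, h3⟩, _⟩
    exact h2 (by simp_all [Prod.ext_iff])
  rw [hset, Set.ncard_union_eq hdisj (Set.toFinite _) (Set.toFinite _)]
  by_cases hx : x ∈ D
  · have hxR : x ∈ R := ⟨hx, rfl⟩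
    have hxK : x ∈ K := ⟨hx, rfl⟩
    rw [Set.ncard_diff_singleton_of_mem hxR,
      Set.ncard_diff_singleton_of_mem hxK, he.1 hx]
    have h1 : 0 < R.ncard := (Set.ncard_pos (Set.toFinite _)).2 ⟨x, hxR⟩
    have h2 : 0 < K.ncard := (Set.ncard_pos (Set.toFinite _)).2 ⟨x, hxK⟩
    omega
  · rw [Set.diff_singleton_eq_self (fun h => hx h.1),
      Set.diff_singleton_eq_self (fun h => hx h.1), he.2 hx]
    omega

lemma row_card {q q' : ℕ} (a : Fin q) : ({p : Fin q × Fin q' | p.1 = a}).ncard = q' := by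
  have h : {p : Fin q × Fin q' | p.1 = a} = (fun b => (a, b)) '' Set.univ := by
    ext ⟨u, v⟩
    simp [eq_comm]
  rw [h, Set.ncard_image_of_injective _ (fun b c h => (Prod.mk.injEq _ _ _ _ ▸ h).2),
    Set.ncard_univ, Nat.card_eq_fintype_card, Fintype.card_fin]

lemma row_split {q q' : ℕ} (D : Set (Fin q × Fin q')) (a : Fin q) :
    (D ∩ {p | p.1 = a}).ncard + (Dᶜ ∩ {p : Fin q × Fin q' | p.1 = a}).ncard = q' := by
  rw [Set.inter_comm D, Set.inter_comm Dᶜ, ← Set.diff_eq,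
    Set.ncard_inter_add_ncard_diff_eq_ncard _ _ (Set.toFinite _), row_card]


lemma row_sum {q q' : ℕ} (D : Set (Fin q × Fin q')) :
    ∑ a : Fin q, (D ∩ {p | p.1 = a}).ncard = D.ncard := by
  classical
  have h1 : ∀ a : Fin q, (D ∩ {p | p.1 = a}).ncard
      = (D.toFinset.filter (fun p => p.1 = a)).card := by
    intro a
    rw [← Set.ncard_coe_finset]
    congr 1
    ext p
    simp [Set.mem_toFinset]
  simp_rw [h1, Set.ncard_eq_toFinset_card' D]
  exact (Finset.card_eq_sum_card_fiberwise (f := Prod.fst)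
    (t := (Finset.univ : Finset (Fin q))) (fun x _ => Finset.mem_univ _)).symm

lemma col_sum {q q' : ℕ} (D : Set (Fin q × Fin q')) :
    ∑ b : Fin q', (D ∩ {p | p.2 = b}).ncard = D.ncard := by
  classical
  have h1 : ∀ b : Fin q', (D ∩ {p | p.2 = b}).ncard
      = (D.toFinset.filter (fun p => p.2 = b)).card := by
    intro b
    rw [← Set.ncard_coe_finset]
    congr 1
    ext p
    simp [Set.mem_toFinset]
  simp_rw [h1, Set.ncard_eq_toFinset_card' D]
  exact (Finset.card_eq_sum_card_fiberwise (f := Prod.snd)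
    (t := (Finset.univ : Finset (Fin q'))) (fun x _ => Finset.mem_univ _)).symm

lemma col_card {q q' : ℕ} (b : Fin q') : ({p : Fin q × Fin q' | p.2 = b}).ncard = q := by
  have h : {p : Fin q × Fin q' | p.2 = b} = (fun a => (a, b)) '' Set.univ := by
    ext ⟨u, v⟩
    simp [eq_comm]
  rw [h, Set.ncard_image_of_injective _ (fun a c h => (Prod.mk.injEq _ _ _ _ ▸ h).1),
    Set.ncard_univ, Nat.card_eq_fintype_card, Fintype.card_fin]

lemma col_split {q q' : ℕ} (D : Set (Fin q × Fin q')) (b : Fin q') :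
    (D ∩ {p | p.2 = b}).ncard + (Dᶜ ∩ {p : Fin q × Fin q' | p.2 = b}).ncard = q := by
  rw [Set.inter_comm D, Set.inter_comm Dᶜ, ← Set.diff_eq,
    Set.ncard_inter_add_ncard_diff_eq_ncard _ _ (Set.toFinite _), col_card]


/-- For the graph `K_q □ K_{q'}` and a set `C` with `C` and `Cᶜ` nonempty:
`(C, Cᶜ)` is equitable with some quotient matrix `S` satisfying `S₁₁ - S₂₁ = -2` iff
there is a rational `c` with `|C ∩ row a| = c·q'` for every row and `|C ∩ col b| = c·q`
for every column; moreover in that case `c = S₂₁/(q + q')`. -/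
theorem stmt5 (q q' : ℕ) (hq : 2 ≤ q) (hq' : 2 ≤ q')
    (C : Set (Fin q × Fin q')) (hC : C.Nonempty) (hCc : Cᶜ.Nonempty) :
    ((∃ S : Matrix (Fin 2) (Fin 2) ℤ,
        IsEquitable2 (rookGraph (Fin q) (Fin q')) C S ∧ S 0 0 - S 1 0 = -2) ↔
      (∃ c : ℚ,
        (∀ a : Fin q, ((C ∩ {p | p.1 = a}).ncard : ℚ) = c * q') ∧
        (∀ b : Fin q', ((C ∩ {p | p.2 = b}).ncard : ℚ) = c * q))) ∧
    (∀ (S : Matrix (Fin 2) (Fin 2) ℤ) (c : ℚ),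
      IsEquitable2 (rookGraph (Fin q) (Fin q')) C S → S 0 0 - S 1 0 = -2 →
      (∀ a : Fin q, ((C ∩ {p | p.1 = a}).ncard : ℚ) = c * q') →
      (∀ b : Fin q', ((C ∩ {p | p.2 = b}).ncard : ℚ) = c * q) →
      c = (S 1 0 : ℚ) / ((q : ℚ) + q')) := by
  have hq0 : 0 < q := by omega
  have hq'0 : 0 < q' := by omega
  have hqQ : (q' : ℚ) ≠ 0 := by positivity
  have hqq : (q : ℚ) + q' ≠ 0 := by positivity
  constructor
  · constructor
    · -- forward
      rintro ⟨S, ⟨-, -, h1, h2⟩, hS⟩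
      have hkey : ∀ x : Fin q × Fin q',
          ((C ∩ {p | p.1 = x.1}).ncard : ℤ) + ((C ∩ {p | p.2 = x.2}).ncard : ℤ) = S 1 0 := by
        intro x
        by_cases hx : x ∈ C
        · have h := rook_key C x 2 ⟨fun _ => rfl, fun h => absurd hx h⟩
          have e1 := (h1 x hx).1
          omega
        · have h := rook_key C x 0 ⟨fun h => absurd h hx, fun _ => rfl⟩
          have e1 := (h2 x hx).1
          omega
      set a0 : Fin q := ⟨0, hq0⟩
      set b0 : Fin q' := ⟨0, hq'0⟩
      have hconst_r : ∀ a : Fin q,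
          (C ∩ {p | p.1 = a}).ncard = (C ∩ {p | p.1 = a0}).ncard := by
        intro a
        have e1 := hkey (a, b0)
        have e2 := hkey (a0, b0)
        simp only at e1 e2
        omega
      have hconst_s : ∀ b : Fin q',
          (C ∩ {p | p.2 = b}).ncard = (C ∩ {p | p.2 = b0}).ncard := by
        intro b
        have e1 := hkey (a0, b)
        have e2 := hkey (a0, b0)
        simp only at e1 e2
        omega
      have hsum1 : q * (C ∩ {p | p.1 = a0}).ncard = C.ncard := by
        rw [← row_sum C, Finset.sum_congr rfl (fun a _ => hconst_r a), Finset.sum_const,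
          Finset.card_univ, Fintype.card_fin, smul_eq_mul]
      have hsum2 : q' * (C ∩ {p | p.2 = b0}).ncard = C.ncard := by
        rw [← col_sum C, Finset.sum_congr rfl (fun b _ => hconst_s b), Finset.sum_const,
          Finset.card_univ, Fintype.card_fin, smul_eq_mul]
      refine ⟨((C ∩ {p | p.1 = a0}).ncard : ℚ) / q', fun a => ?_, fun b => ?_⟩
      · rw [hconst_r a]
        field_simp
      · rw [hconst_s b]
        rw [div_mul_eq_mul_div, eq_div_iff hqQ]
        have : q * (C ∩ {p | p.1 = a0}).ncard = q' * (C ∩ {p | p.2 = b0}).ncard := by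
          omega
        have hQ : (q : ℚ) * (C ∩ {p | p.1 = a0}).ncard
            = (q' : ℚ) * (C ∩ {p | p.2 = b0}).ncard := by exact_mod_cast this
        linarith
    · -- reverse
      rintro ⟨c, hrow, hcol⟩
      set a0 : Fin q := ⟨0, hq0⟩
      set b0 : Fin q' := ⟨0, hq'0⟩
      set k : ℕ := (C ∩ {p | p.1 = a0}).ncard + (C ∩ {p | p.2 = b0}).ncard with hk
      have hconst : ∀ x : Fin q × Fin q',
          (C ∩ {p | p.1 = x.1}).ncard + (C ∩ {p | p.2 = x.2}).ncard = k := by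
        intro x
        have : (((C ∩ {p | p.1 = x.1}).ncard : ℚ) + (C ∩ {p | p.2 = x.2}).ncard : ℚ)
            = (k : ℚ) := by
          rw [hrow x.1, hcol x.2, hk]
          push_cast
          rw [hrow a0, hcol b0]
        exact_mod_cast this
      refine ⟨!![(k : ℤ) - 2, (q : ℤ) + q' - k; (k : ℤ), (q : ℤ) + q' - k - 2],
        ⟨hC, hCc, fun x hx => ?_, fun x hx => ?_⟩, by norm_num⟩
      · have h1 := rook_key C x 2 ⟨fun _ => rfl, fun h => absurd hx h⟩
        have h2 := rook_key Cᶜ x 0 ⟨fun h => absurd hx h, fun _ => rfl⟩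
        have h3 := row_split C x.1
        have h4 := col_split C x.2
        have h5 := hconst x
        constructor <;> · norm_num; omega
      · have h1 := rook_key C x 0 ⟨fun h => absurd h hx, fun _ => rfl⟩
        have h2 := rook_key Cᶜ x 2 ⟨fun _ => rfl, fun h => absurd hx h⟩
        have h3 := row_split C x.1
        have h4 := col_split C x.2
        have h5 := hconst x
        constructor <;> · norm_num; omega
  · -- uniqueness
    intro S c hEq hS hrow hcol
    obtain ⟨x, hx⟩ := hCc
    have h0 := rook_key C x 0 ⟨fun h => absurd h hx, fun _ => rfl⟩
    have h1 := (hEq.2.2.2 x hx).1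
    have hS10 : (S 1 0 : ℚ) = c * q' + c * q := by
      have hq2 : (((rookGraph (Fin q) (Fin q')).neighborSet x ∩ C).ncard : ℚ)
          = ((C ∩ {p | p.1 = x.1}).ncard : ℚ) + ((C ∩ {p | p.2 = x.2}).ncard : ℚ) := by
        exact_mod_cast congrArg (Nat.cast : ℕ → ℚ) (by omega : ((rookGraph (Fin q) (Fin q')).neighborSet x ∩ C).ncard = (C ∩ {p | p.1 = x.1}).ncard + (C ∩ {p | p.2 = x.2}).ncard)
      rw [hrow, hcol] at hq2
      rw [← hq2]
      exact_mod_cast congrArg (Int.cast : ℤ → ℚ) h1.symm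
    rw [eq_div_iff hqq]
    linarith [hS10]
end
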